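/- arXiv:1211.2682 — 2 statements merged into one kernel-verified Lean document; each statement's English description precedes it below -/
import Mathlib

section
/- A function nonincreasing along a trajectory is constant on the ω-limit set: let φ be a continuous flow on a metric space X (φ(0) = id, φ(s+t) = φ(s) ∘ φ(t), jointly continuous in (t,x)), let x ∈ X have precompact forward orbit {φ(t)(x) : t ≥ 0}, and let V : X → ℝ be continuous such that t ↦ V(φ(t)(x)) is antitone on [0,∞). Then the ω-limit set ω(x) = ⋂_{T ≥ 0} closure{φ(t)(x) : t ≥ T} is nonempty and compact, the limit c = lim_{t→∞} V(φ(t)(x)) exists, and V(y) = c for every y ∈ ω(x). -/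
open Filter Topology

/-- A function nonincreasing along a trajectory is constant on the ω-limit set: for
a continuous flow `φ` on a metric space `X`, a point `x` with precompact forward
orbit, and a continuous `V : X → ℝ` with `t ↦ V(φ t x)` antitone on `[0,∞)`, the
ω-limit set `ω(x) = ⋂_{T ≥ 0} closure {φ t x : t ≥ T}` is nonempty and compact, the
limit `c = lim_{t→∞} V(φ t x)` exists, and `V ≡ c` on `ω(x)`. -/
theorem lyapunov_constant_on_omega_limit
    {X : Type*} [MetricSpace X]
    (φ : ℝ → X → X)
    (hφcont : Continuous fun p : ℝ × X => φ p.1 p.2)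
    (hφ0 : φ 0 = id)
    (hφadd : ∀ s t : ℝ, φ (s + t) = φ s ∘ φ t)
    (x : X)
    (hpre : IsCompact (closure ((fun t => φ t x) '' Set.Ici (0 : ℝ))))
    (V : X → ℝ) (hV : Continuous V)
    (hmono : AntitoneOn (fun t => V (φ t x)) (Set.Ici (0 : ℝ))) :
    (⋂ (T : ℝ) (_ : 0 ≤ T), closure ((fun t => φ t x) '' Set.Ici T)).Nonempty ∧
    IsCompact (⋂ (T : ℝ) (_ : 0 ≤ T), closure ((fun t => φ t x) '' Set.Ici T)) ∧
    ∃ c : ℝ, Tendsto (fun t => V (φ t x)) atTop (𝓝 c) ∧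
      ∀ y ∈ ⋂ (T : ℝ) (_ : 0 ≤ T), closure ((fun t => φ t x) '' Set.Ici T), V y = c := by
  set f : ℝ → X := fun t => φ t x with hf
  -- each closure is a nonempty compact subset of the big compact set
  have hsub : ∀ T : ℝ, 0 ≤ T → closure (f '' Set.Ici T) ⊆ closure (f '' Set.Ici 0) := by
    intro T hT
    exact closure_mono (Set.image_mono (Set.Ici_subset_Ici.mpr hT))
  have hcpt : ∀ T : ℝ, 0 ≤ T → IsCompact (closure (f '' Set.Ici T)) := by
    intro T hT
    exact hpre.of_isClosed_subset isClosed_closure (hsub T hT)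
  have hne : ∀ T : ℝ, (closure (f '' Set.Ici T)).Nonempty := by
    intro T
    exact (Set.Nonempty.image f ⟨T, le_refl T⟩).closure
  -- rewrite the biInter as an iInter over a subtype
  have hEq : (⋂ (T : ℝ) (_ : 0 ≤ T), closure (f '' Set.Ici T)) =
      ⋂ T : {T : ℝ // 0 ≤ T}, closure (f '' Set.Ici T.1) := by
    rw [Set.iInter_subtype]
  have hdir : Directed (· ⊇ ·) fun T : {T : ℝ // 0 ≤ T} => closure (f '' Set.Ici T.1) := by
    intro a b
    refine ⟨⟨max a.1 b.1, le_trans a.2 (le_max_left _ _)⟩, ?_, ?_⟩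
    · exact closure_mono (Set.image_mono (Set.Ici_subset_Ici.mpr (le_max_left _ _)))
    · exact closure_mono (Set.image_mono (Set.Ici_subset_Ici.mpr (le_max_right _ _)))
  have hNe : (⋂ (T : ℝ) (_ : 0 ≤ T), closure (f '' Set.Ici T)).Nonempty := by
    rw [hEq]
    exact IsCompact.nonempty_iInter_of_directed_nonempty_isCompact_isClosed _ hdir
      (fun T => hne T.1) (fun T => hcpt T.1 T.2) (fun T => isClosed_closure)
  have hCpt : IsCompact (⋂ (T : ℝ) (_ : 0 ≤ T), closure (f '' Set.Ici T)) := by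
    refine (hcpt 0 le_rfl).of_isClosed_subset ?_ ?_
    · exact isClosed_iInter fun T => isClosed_iInter fun _ => isClosed_closure
    · exact Set.biInter_subset_of_mem (le_refl (0 : ℝ))
  refine ⟨hNe, hCpt, ?_⟩
  -- the auxiliary globally antitone function
  set g : ℝ → ℝ := fun t => V (f (max t 0)) with hg
  have hganti : Antitone g := by
    intro s t hst
    exact hmono (le_max_right s 0) (le_max_right t 0) (max_le_max hst le_rfl)
  -- boundedness below
  have hVbdd : BddBelow (Set.range g) := by
    obtain ⟨C, hC⟩ := (hpre.image hV).bddBelow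
    refine ⟨C, fun v hv => ?_⟩
    obtain ⟨t, rfl⟩ := hv
    exact hC ⟨f (max t 0), subset_closure ⟨max t 0, Set.mem_Ici.mpr (le_max_right _ _), rfl⟩, rfl⟩
  have hgtend : Tendsto g atTop (𝓝 (⨅ t, g t)) := tendsto_atTop_ciInf hganti hVbdd
  set c := ⨅ t, g t with hc
  have hfg : ∀ᶠ t in atTop, V (f t) = g t := by
    filter_upwards [eventually_ge_atTop (0 : ℝ)] with t ht
    simp [hg, max_eq_left ht]
  have htend : Tendsto (fun t => V (f t)) atTop (𝓝 c) :=
    hgtend.congr' (hfg.mono fun t h => h.symm)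
  refine ⟨c, htend, ?_⟩
  intro y hy
  -- V y lies in [c, V (f T)] for every T ≥ 0
  have key : ∀ T : ℝ, 0 ≤ T → c ≤ V y ∧ V y ≤ V (f T) := by
    intro T hT
    have hyT : y ∈ closure (f '' Set.Ici T) := by
      exact Set.mem_iInter.mp (Set.mem_iInter.mp hy T) hT
    have hVy : V y ∈ closure (V '' (f '' Set.Ici T)) :=
      image_closure_subset_closure_image hV ⟨y, hyT, rfl⟩
    have hsub2 : V '' (f '' Set.Ici T) ⊆ Set.Icc c (V (f T)) := by
      rintro v ⟨z, ⟨t, ht, rfl⟩, rfl⟩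
      constructor
      · -- c ≤ V (f t) since g nonincreasing to inf c: c = ⨅ g ≤ g t = V f t
        have : c ≤ g t := ciInf_le hVbdd t
        have : g t = V (f t) := by
          simp [hg, max_eq_left (le_trans hT ht)]
        linarith [ciInf_le hVbdd t, this.symm ▸ (ciInf_le hVbdd t)]
      · exact hmono hT (le_trans hT ht) ht
    have : V y ∈ Set.Icc c (V (f T)) :=
      (isClosed_Icc.closure_subset_iff.mpr hsub2) hVy
    exact ⟨this.1, this.2⟩
  have h1 : c ≤ V y := (key 0 le_rfl).1
  have h2 : V y ≤ c := by
    refine ge_of_tendsto htend ?_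
    filter_upwards [eventually_ge_atTop (0 : ℝ)] with T hT
    exact (key T hT).2
  linarith
end

section
/- The ω-limit set of a dissipative mechanical system consists of motionless critical configurations: let U : ℝⁿ → ℝ be continuously differentiable with locally Lipschitz gradient ∇U, and let F : ℝⁿ × ℝⁿ → ℝⁿ be locally Lipschitz with ⟨F(p, v), v⟩ < 0 for all p ∈ ℝⁿ and all v ≠ 0, and F(p, 0) = 0 for all p. Let q : [0,∞) → ℝⁿ be twice differentiable with q̈(t) = −∇U(q(t)) + F(q(t), q̇(t)) for all t ≥ 0, and suppose the forward orbit {(q(t), q̇(t)) : t ≥ 0} is precompact in ℝⁿ × ℝⁿ. Then the ω-limit set of the curve t ↦ (q(t), q̇(t)) is contained in the set {(p, 0) : p ∈ ℝⁿ, ∇U(p) = 0}. -/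
open RealInnerProductSpace Filter Topology

/-- If `f` has nonpositive derivative on a convex set, it is antitone there. -/
lemma aux_antitoneOn {f f' : ℝ → ℝ} {s : Set ℝ} (hs : Convex ℝ s)
    (hf : ∀ t ∈ s, HasDerivWithinAt f (f' t) s t) (h0 : ∀ t ∈ s, f' t ≤ 0) :
    AntitoneOn f s := by
  have hd : ∀ t ∈ interior s, HasDerivAt f (f' t) t := fun t ht =>
    (hf t (interior_subset ht)).hasDerivAt (mem_interior_iff_mem_nhds.mp ht)
  refine antitoneOn_of_deriv_nonpos hs
    (fun t ht => (hf t ht).continuousWithinAt)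
    (fun t ht => (hd t ht).differentiableAt.differentiableWithinAt) ?_
  intro t ht
  rw [(hd t ht).deriv]
  exact h0 t (interior_subset ht)

/-- Quantitative decrease: derivative ≤ -c on `Icc a b` gives `f b ≤ f a - c*(b-a)`. -/
lemma aux_decrease {f f' : ℝ → ℝ} {a b c : ℝ} (hab : a ≤ b)
    (hf : ∀ t ∈ Set.Icc a b, HasDerivWithinAt f (f' t) (Set.Icc a b) t)
    (h0 : ∀ t ∈ Set.Icc a b, f' t ≤ -c) :
    f b ≤ f a - c * (b - a) := by
  have h := aux_antitoneOn (f := fun t => f t + c * t) (f' := fun t => f' t + c)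
    (convex_Icc a b)
    (fun t ht => by
      exact (hf t ht).add (((hasDerivWithinAt_id t (Set.Icc a b)).const_mul c).congr_deriv (by ring)))
    (fun t ht => by show f' t + c ≤ 0; linarith [h0 t ht])
  have := h (Set.left_mem_Icc.2 hab) (Set.right_mem_Icc.2 hab) hab
  simp only at this
  linarith

/-- Quantitative increase: derivative ≥ c on `Icc a b` gives `f b ≥ f a + c*(b-a)`. -/
lemma aux_increase {f f' : ℝ → ℝ} {a b c : ℝ} (hab : a ≤ b)
    (hf : ∀ t ∈ Set.Icc a b, HasDerivWithinAt f (f' t) (Set.Icc a b) t)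
    (h0 : ∀ t ∈ Set.Icc a b, c ≤ f' t) :
    f a + c * (b - a) ≤ f b := by
  have := aux_decrease (f := fun t => -f t) (f' := fun t => -f' t) (c := c) hab
    (fun t ht => (hf t ht).neg) (fun t ht => by show -f' t ≤ -c; linarith [h0 t ht])
  linarith

/-- Choice of the small parameters in the critical-point argument. -/
lemma aux_const {a M r : ℝ} (ha : 0 < a) (hM : 0 < M) (hr : 0 < r) :
    ∃ ε τ : ℝ, 0 < ε ∧ 0 < τ ∧ ε + M*τ ≤ r ∧ ε + ((ε + M*τ)*τ) ≤ r ∧ a/2*τ = 2*ε := by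
  have hane : a ≠ 0 := ne_of_gt ha
  set c₁ := 1 + 4*M/a + 4*r/a with hc₁def
  have h1 : (0:ℝ) ≤ 4*M/a := by positivity
  have h2 : (0:ℝ) ≤ 4*r/a := by positivity
  have hc₁pos : 0 < c₁ := by rw [hc₁def]; linarith
  have hc₁ne : c₁ ≠ 0 := ne_of_gt hc₁pos
  refine ⟨r/c₁, 4*(r/c₁)/a, ?_, ?_, ?_, ?_, ?_⟩
  · positivity
  · positivity
  · have he : r/c₁ + M*(4*(r/c₁)/a) = (r/c₁)*(1 + 4*M/a) := by field_simp
    have hle : (r/c₁)*(1 + 4*M/a) ≤ (r/c₁)*c₁ := by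
      have : 1 + 4*M/a ≤ c₁ := by rw [hc₁def]; linarith
      have hεpos : (0:ℝ) ≤ r/c₁ := by positivity
      exact mul_le_mul_of_nonneg_left this hεpos
    have hεc : (r/c₁)*c₁ = r := by field_simp
    linarith
  · have hkey1 : r/c₁ + M*(4*(r/c₁)/a) ≤ r := by
      have he : r/c₁ + M*(4*(r/c₁)/a) = (r/c₁)*(1 + 4*M/a) := by field_simp
      have hle : (r/c₁)*(1 + 4*M/a) ≤ (r/c₁)*c₁ := by
        have : 1 + 4*M/a ≤ c₁ := by rw [hc₁def]; linarith
        have hεpos : (0:ℝ) ≤ r/c₁ := by positivity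
        exact mul_le_mul_of_nonneg_left this hεpos
      have hεc : (r/c₁)*c₁ = r := by field_simp
      linarith
    have hτpos : (0:ℝ) ≤ 4*(r/c₁)/a := by positivity
    have h2' : (r/c₁ + M*(4*(r/c₁)/a))*(4*(r/c₁)/a) ≤ r*(4*(r/c₁)/a) :=
      mul_le_mul_of_nonneg_right hkey1 hτpos
    have he : r/c₁ + r*(4*(r/c₁)/a) = (r/c₁)*(1 + 4*r/a) := by field_simp
    have hle : (r/c₁)*(1 + 4*r/a) ≤ (r/c₁)*c₁ := by
      have : 1 + 4*r/a ≤ c₁ := by rw [hc₁def]; linarith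
      have hεpos : (0:ℝ) ≤ r/c₁ := by positivity
      exact mul_le_mul_of_nonneg_left this hεpos
    have hεc : (r/c₁)*c₁ = r := by field_simp
    linarith
  · field_simp
    ring

/-- The ω-limit set of a dissipative mechanical system consists of motionless
critical configurations: if `U` is `C¹` with locally Lipschitz gradient, `F` is
locally Lipschitz with `⟨F(p,v), v⟩ < 0` for `v ≠ 0` and `F(p,0) = 0`, and
`q : [0,∞) → ℝⁿ` is a twice differentiable solution of `q̈ = −∇U(q) + F(q, q̇)`
with precompact forward orbit `{(q(t), q̇(t)) : t ≥ 0}`, then the ω-limit set of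
`t ↦ (q(t), q̇(t))` is contained in `{(p, 0) : ∇U(p) = 0}`. -/
theorem omega_limit_subset_critical
    {n : ℕ}
    (U : EuclideanSpace ℝ (Fin n) → ℝ)
    (hU : ContDiff ℝ 1 U) (hgradLip : LocallyLipschitz (gradient U))
    (F : EuclideanSpace ℝ (Fin n) → EuclideanSpace ℝ (Fin n) → EuclideanSpace ℝ (Fin n))
    (hFLip : LocallyLipschitz
      (fun p : EuclideanSpace ℝ (Fin n) × EuclideanSpace ℝ (Fin n) => F p.1 p.2))
    (hFdiss : ∀ (p v : EuclideanSpace ℝ (Fin n)), v ≠ 0 → ⟪F p v, v⟫ < 0)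
    (hF0 : ∀ p : EuclideanSpace ℝ (Fin n), F p 0 = 0)
    (q q' q'' : ℝ → EuclideanSpace ℝ (Fin n))
    (hq : ∀ t : ℝ, 0 ≤ t → HasDerivWithinAt q (q' t) (Set.Ici 0) t)
    (hq' : ∀ t : ℝ, 0 ≤ t → HasDerivWithinAt q' (q'' t) (Set.Ici 0) t)
    (heq : ∀ t : ℝ, 0 ≤ t → q'' t = -gradient U (q t) + F (q t) (q' t))
    (hpre : IsCompact (closure ((fun t => (q t, q' t)) '' Set.Ici (0 : ℝ)))) :
    (⋂ (T : ℝ) (_ : 0 ≤ T), closure ((fun t => (q t, q' t)) '' Set.Ici T))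
      ⊆ {p : EuclideanSpace ℝ (Fin n) × EuclideanSpace ℝ (Fin n) |
          gradient U p.1 = 0 ∧ p.2 = 0} := by
  classical
  have hgradC : Continuous (gradient U) := hgradLip.continuous
  have hFC : Continuous
      (fun x : EuclideanSpace ℝ (Fin n) × EuclideanSpace ℝ (Fin n) => F x.1 x.2) :=
    hFLip.continuous
  set G : EuclideanSpace ℝ (Fin n) × EuclideanSpace ℝ (Fin n) → EuclideanSpace ℝ (Fin n) :=
    fun x => -gradient U x.1 + F x.1 x.2 with hG
  have hGC : Continuous G := ((hgradC.comp continuous_fst).neg).add hFC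
  set K := closure ((fun t => (q t, q' t)) '' Set.Ici (0 : ℝ)) with hKdef
  have horb : ∀ t : ℝ, 0 ≤ t → (q t, q' t) ∈ K := fun t ht =>
    subset_closure ⟨t, ht, rfl⟩
  have hKne : K.Nonempty := ⟨_, horb 0 le_rfl⟩
  -- uniform bound on velocity and acceleration
  obtain ⟨M0, hM0⟩ := hpre.exists_bound_of_continuousOn
    ((hGC.prodMk continuous_snd).continuousOn)
  set M := max M0 1 with hMdef
  have hM1 : (1:ℝ) ≤ M := le_max_right _ _
  have hMpos : (0:ℝ) < M := lt_of_lt_of_le one_pos hM1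
  have hbdd : ∀ x ∈ K, ‖G x‖ ≤ M ∧ ‖x.2‖ ≤ M := by
    intro x hx
    have h := hM0 x hx
    constructor
    · exact le_trans (le_trans (norm_fst_le (G x, x.2)) h) (le_max_left _ _)
    · exact le_trans (le_trans (norm_snd_le (G x, x.2)) h) (le_max_left _ _)
  have hq'M : ∀ t : ℝ, 0 ≤ t → ‖q' t‖ ≤ M := fun t ht => (hbdd _ (horb t ht)).2
  have hq''M : ∀ t : ℝ, 0 ≤ t → ‖q'' t‖ ≤ M := fun t ht => by
    rw [heq t ht]; exact (hbdd _ (horb t ht)).1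
  -- energy
  set En : ℝ → ℝ := fun t => U (q t) + (1/2) * ⟪q' t, q' t⟫ with hEndef
  have hUdiff : Differentiable ℝ U := hU.differentiable one_ne_zero
  have hDer : ∀ t : ℝ, 0 ≤ t →
      HasDerivWithinAt En (⟪F (q t) (q' t), q' t⟫) (Set.Ici 0) t := by
    intro t ht
    have hg : HasFDerivAt U ((InnerProductSpace.toDual ℝ _) (gradient U (q t))) (q t) :=
      hasGradientAt_iff_hasFDerivAt.mp (hUdiff (q t)).hasGradientAt
    have h1 : HasDerivWithinAt (fun s => U (q s)) (⟪gradient U (q t), q' t⟫) (Set.Ici 0) t := by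
      have := hg.comp_hasDerivWithinAt t (hq t ht)
      simp [Function.comp_def, InnerProductSpace.toDual_apply_apply] at this ⊢
      exact this
    have h2 : HasDerivWithinAt (fun s => ⟪q' s, q' s⟫)
        (⟪q' t, q'' t⟫ + ⟪q'' t, q' t⟫) (Set.Ici 0) t :=
      (hq' t ht).inner ℝ (hq' t ht)
    have h3 := h1.add (HasDerivWithinAt.const_mul (1/2 : ℝ) h2)
    refine h3.congr_deriv ?_
    rw [heq t ht]
    simp only [inner_add_left, inner_neg_left, inner_add_right, inner_neg_right]
    rw [real_inner_comm (q' t) (F (q t) (q' t)), real_inner_comm (q' t) (gradient U (q t))]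
    ring
  have hDiss : ∀ t : ℝ, 0 ≤ t → ⟪F (q t) (q' t), q' t⟫ ≤ 0 := by
    intro t ht
    by_cases h : q' t = 0
    · simp [h, hF0]
    · exact le_of_lt (hFdiss _ _ h)
  have hEnAnti : AntitoneOn En (Set.Ici 0) :=
    aux_antitoneOn (convex_Ici 0) (fun t ht => hDer t ht) (fun t ht => hDiss t ht)
  -- lower bound on energy
  obtain ⟨x₀, hx₀K, hx₀min⟩ := hpre.exists_isMinOn hKne
    (((hU.continuous.comp continuous_fst).add
      (continuous_const.mul (continuous_snd.inner continuous_snd))).continuousOn)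
  set B := U x₀.1 + (1/2) * ⟪x₀.2, x₀.2⟫ with hBdef
  have hB : ∀ t : ℝ, 0 ≤ t → B ≤ En t := fun t ht =>
    isMinOn_iff.mp hx₀min _ (horb t ht)
  -- Step A : velocity tends to zero
  have hA : ∀ ε : ℝ, 0 < ε → ∃ T : ℝ, 0 ≤ T ∧ ∀ t : ℝ, T ≤ t → ‖q' t‖ < ε := by
    intro ε hε
    by_contra hcon
    push_neg at hcon
    have hfreq : ∀ T : ℝ, 0 ≤ T → ∃ t : ℝ, T ≤ t ∧ ε ≤ ‖q' t‖ := by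
      intro T hT
      obtain ⟨t, ht1, ht2⟩ := hcon T hT
      exact ⟨t, ht1, ht2⟩
    set C := K ∩ {x : EuclideanSpace ℝ (Fin n) × EuclideanSpace ℝ (Fin n) | ε/2 ≤ ‖x.2‖}
      with hCdef
    have hCcomp : IsCompact C :=
      hpre.inter_right (isClosed_le continuous_const continuous_snd.norm)
    obtain ⟨t₁, ht₁, ht₁'⟩ := hfreq 0 le_rfl
    have hCne : C.Nonempty :=
      ⟨(q t₁, q' t₁), horb t₁ ht₁, by simp only [Set.mem_setOf_eq]; linarith⟩
    obtain ⟨y₀, hy₀C, hy₀max⟩ := hCcomp.exists_isMaxOn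
      (f := fun x : EuclideanSpace ℝ (Fin n) × EuclideanSpace ℝ (Fin n) => ⟪F x.1 x.2, x.2⟫)
      hCne ((hFC.inner continuous_snd)).continuousOn
    set c := -⟪F y₀.1 y₀.2, y₀.2⟫ with hcdef
    have hy₀ne : y₀.2 ≠ 0 := by
      intro h
      have := hy₀C.2
      rw [Set.mem_setOf_eq, h] at this
      simp at this
      linarith
    have hcpos : 0 < c := by
      have := hFdiss y₀.1 y₀.2 hy₀ne
      simp only [hcdef]
      linarith
    have hcbound : ∀ x ∈ C, ⟪F x.1 x.2, x.2⟫ ≤ -c := by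
      intro x hx
      have := isMaxOn_iff.mp hy₀max x hx
      simp only [hcdef]
      linarith
    set δ := ε/(2*M) with hδdef
    have hδpos : 0 < δ := div_pos hε (by linarith)
    have hMδ : M * δ = ε/2 := by
      rw [hδdef]; field_simp
    have hstep : ∀ s : ℝ, 0 ≤ s → ε ≤ ‖q' s‖ → En (s+δ) ≤ En s - c*δ := by
      intro s hs hεs
      have hsub : Set.Icc s (s+δ) ⊆ Set.Ici 0 := fun t ht => le_trans hs ht.1
      have hsmem : s ∈ Set.Icc s (s+δ) := Set.left_mem_Icc.2 (by linarith)
      have hq'lip : ∀ t ∈ Set.Icc s (s+δ), ‖q' t - q' s‖ ≤ ε/2 := by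
        intro t ht
        have h := (convex_Icc s (s+δ)).norm_image_sub_le_of_norm_hasDerivWithin_le
          (f := q') (f' := q'') (fun u hu => (hq' u (hsub hu)).mono hsub)
          (fun u hu => hq''M u (hsub hu)) hsmem ht
        have htv : ‖t - s‖ ≤ δ := by
          rw [Real.norm_eq_abs, abs_of_nonneg (by linarith [ht.1])]
          linarith [ht.2]
        calc ‖q' t - q' s‖ ≤ M * ‖t - s‖ := h
          _ ≤ M * δ := by nlinarith
          _ = ε/2 := hMδ
      have hin : ∀ t ∈ Set.Icc s (s+δ), (q t, q' t) ∈ C := by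
        intro t ht
        refine ⟨horb t (hsub ht), ?_⟩
        have h1 := hq'lip t ht
        have h2 : ‖q' s‖ - ‖q' t‖ ≤ ‖q' t - q' s‖ := by
          rw [norm_sub_rev]
          exact norm_sub_norm_le _ _
        simp only [Set.mem_setOf_eq]
        linarith
      have h := aux_decrease (f := En) (f' := fun t => ⟪F (q t) (q' t), q' t⟫) (c := c)
        (by linarith : s ≤ s + δ)
        (fun t ht => (hDer t (hsub ht)).mono hsub)
        (fun t ht => hcbound _ (hin t ht))
      have : s + δ - s = δ := by ring
      rwa [this] at h
    have hiter : ∀ k : ℕ, ∃ t : ℝ, 0 ≤ t ∧ En t ≤ En 0 - k * (c*δ) := by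
      intro k
      induction k with
      | zero => exact ⟨0, le_rfl, by simp⟩
      | succ k ih =>
        obtain ⟨t, ht, hEt⟩ := ih
        obtain ⟨s, hs1, hs2⟩ := hfreq t ht
        have hs0 : 0 ≤ s := le_trans ht hs1
        refine ⟨s+δ, by linarith, ?_⟩
        have h1 := hstep s hs0 hs2
        have h2 : En s ≤ En t := hEnAnti ht hs0 hs1
        push_cast
        linarith
    obtain ⟨k, hk⟩ := exists_nat_gt ((En 0 - B)/(c*δ))
    obtain ⟨t, ht, hEt⟩ := hiter k
    have hBt := hB t ht
    have hcd : 0 < c*δ := mul_pos hcpos hδpos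
    rw [div_lt_iff₀ hcd] at hk
    linarith
  -- now the main argument
  intro x hx
  simp only [Set.mem_iInter] at hx
  have hvisit : ∀ ε : ℝ, 0 < ε → ∀ T : ℝ, 0 ≤ T → ∃ t : ℝ, T ≤ t ∧
      dist (q t, q' t) x < ε := by
    intro ε hε T hT
    have hxT := hx T hT
    rw [Metric.mem_closure_iff] at hxT
    obtain ⟨y, hy, hd⟩ := hxT ε hε
    obtain ⟨t, ht, rfl⟩ := hy
    exact ⟨t, ht, by rwa [dist_comm]⟩
  have hx2 : x.2 = 0 := by
    by_contra h2
    have hn : 0 < ‖x.2‖ := norm_pos_iff.mpr h2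
    obtain ⟨T, hT, hT'⟩ := hA (‖x.2‖/2) (by linarith)
    obtain ⟨t, ht, hd⟩ := hvisit (‖x.2‖/2) (by linarith) T hT
    rw [Prod.dist_eq] at hd
    have h1 : dist (q' t) x.2 < ‖x.2‖/2 :=
      lt_of_le_of_lt (le_max_right _ _) hd
    have h2' := hT' t ht
    rw [dist_eq_norm] at h1
    have h3 : ‖x.2‖ - ‖q' t‖ ≤ ‖q' t - x.2‖ := by
      rw [norm_sub_rev]; exact norm_sub_norm_le _ _
    linarith
  refine ⟨?_, hx2⟩
  by_contra hg
  set g := gradient U x.1 with hgdef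
  have hgn : 0 < ‖g‖ := norm_pos_iff.mpr hg
  set a := ‖g‖ with hadef
  set u : EuclideanSpace ℝ (Fin n) := -(a⁻¹ • g) with hudef
  have hunorm : ‖u‖ = 1 := by
    rw [hudef, norm_neg, norm_smul, norm_inv, Real.norm_eq_abs, abs_of_pos hgn]
    exact inv_mul_cancel₀ (ne_of_gt hgn)
  have hGpu : ⟪G (x.1, (0 : EuclideanSpace ℝ (Fin n))), u⟫ = a := by
    simp only [hG, hudef, hF0, add_zero, inner_neg_neg, inner_smul_right,
      real_inner_self_eq_norm_sq]
    rw [← hgdef, real_inner_self_eq_norm_sq, ← hadef]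
    field_simp
  have hucont : Continuous fun y => ⟪G y, u⟫ := hGC.inner continuous_const
  have hnhds : {y : EuclideanSpace ℝ (Fin n) × EuclideanSpace ℝ (Fin n) |
      a/2 < ⟪G y, u⟫} ∈ 𝓝 (x.1, (0 : EuclideanSpace ℝ (Fin n))) := by
    have : ContinuousAt (fun y => ⟪G y, u⟫) (x.1, 0) := hucont.continuousAt
    have hlt : a/2 < ⟪G (x.1, (0 : EuclideanSpace ℝ (Fin n))), u⟫ := by
      rw [hGpu]; linarith
    exact this (Ioi_mem_nhds hlt)
  obtain ⟨r', hr'pos, hball⟩ := Metric.mem_nhds_iff.mp hnhds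
  set r := r'/2 with hrdef
  have hrpos : 0 < r := by rw [hrdef]; linarith
  have hGball : ∀ y, dist y (x.1, (0 : EuclideanSpace ℝ (Fin n))) ≤ r → a/2 ≤ ⟪G y, u⟫ := by
    intro y hy
    have hmem : y ∈ Metric.ball (x.1, (0 : EuclideanSpace ℝ (Fin n))) r' :=
      lt_of_le_of_lt hy (by rw [hrdef]; linarith)
    exact le_of_lt (hball hmem)
  obtain ⟨ε, τ, hεpos, hτpos, hkey1, hkey2, hkey3⟩ := aux_const hgn hMpos hrpos
  obtain ⟨T₀, hT₀, hT₀'⟩ := hA ε hεpos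
  obtain ⟨t₀, ht₀T, hd₀⟩ := hvisit ε hεpos T₀ hT₀
  have ht₀0 : 0 ≤ t₀ := le_trans hT₀ ht₀T
  have hxeq : x = (x.1, (0 : EuclideanSpace ℝ (Fin n))) := by
    rw [← hx2]
  rw [hxeq, Prod.dist_eq] at hd₀
  have hdq : ‖q t₀ - x.1‖ < ε := by
    have h := lt_of_le_of_lt (le_max_left _ _) hd₀
    rwa [dist_eq_norm] at h
  have hdq' : ‖q' t₀‖ < ε := by
    have h := lt_of_le_of_lt (le_max_right _ _) hd₀
    rwa [dist_eq_norm, sub_zero] at h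
  set s := Set.Icc t₀ (t₀+τ) with hsdef
  have hssub : s ⊆ Set.Ici 0 := fun t ht => le_trans ht₀0 ht.1
  have ht₀s : t₀ ∈ s := Set.left_mem_Icc.2 (by linarith)
  have hvel : ∀ t ∈ s, ‖q' t - q' t₀‖ ≤ M*τ := by
    intro t ht
    have h := (convex_Icc t₀ (t₀+τ)).norm_image_sub_le_of_norm_hasDerivWithin_le
      (f := q') (f' := q'') (fun v hv => (hq' v (hssub hv)).mono hssub)
      (fun v hv => hq''M v (hssub hv)) ht₀s ht
    have htv : ‖t - t₀‖ ≤ τ := by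
      rw [Real.norm_eq_abs, abs_of_nonneg (by linarith [ht.1])]
      linarith [ht.2]
    calc ‖q' t - q' t₀‖ ≤ M*‖t - t₀‖ := h
      _ ≤ M*τ := mul_le_mul_of_nonneg_left htv (le_of_lt hMpos)
  have hvel' : ∀ t ∈ s, ‖q' t‖ ≤ ε + M*τ := by
    intro t ht
    have h1 := hvel t ht
    have h2 : ‖q' t‖ - ‖q' t₀‖ ≤ ‖q' t - q' t₀‖ := norm_sub_norm_le _ _
    linarith
  have hposdrift : ∀ t ∈ s, ‖q t - q t₀‖ ≤ (ε + M*τ)*τ := by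
    intro t ht
    have h := (convex_Icc t₀ (t₀+τ)).norm_image_sub_le_of_norm_hasDerivWithin_le
      (f := q) (f' := q') (fun v hv => (hq v (hssub hv)).mono hssub)
      (fun v hv => hvel' v hv) ht₀s ht
    have htv : ‖t - t₀‖ ≤ τ := by
      rw [Real.norm_eq_abs, abs_of_nonneg (by linarith [ht.1])]
      linarith [ht.2]
    have hεM : (0:ℝ) ≤ ε + M*τ := by
      have := mul_pos hMpos hτpos
      linarith
    calc ‖q t - q t₀‖ ≤ (ε + M*τ)*‖t - t₀‖ := h
      _ ≤ (ε + M*τ)*τ := mul_le_mul_of_nonneg_left htv hεM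
  have hinr : ∀ t ∈ s, dist (q t, q' t) (x.1, (0 : EuclideanSpace ℝ (Fin n))) ≤ r := by
    intro t ht
    rw [Prod.dist_eq]
    have h1 : dist (q t) x.1 ≤ r := by
      rw [dist_eq_norm]
      have htri : ‖q t - x.1‖ ≤ ‖q t - q t₀‖ + ‖q t₀ - x.1‖ :=
        norm_sub_le_norm_sub_add_norm_sub _ _ _
      linarith [hposdrift t ht]
    have h2 : dist (q' t) 0 ≤ r := by
      rw [dist_eq_norm, sub_zero]
      linarith [hvel' t ht]
    exact max_le h1 h2
  have hacc : ∀ t ∈ s, a/2 ≤ ⟪q'' t, u⟫ := by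
    intro t ht
    have h := hGball _ (hinr t ht)
    rw [heq t (hssub ht)]
    have heqG : ⟪G (q t, q' t), u⟫ = ⟪-gradient U (q t) + F (q t) (q' t), u⟫ := by
      simp only [hG]
    linarith [heqG ▸ h]
  have hder_h : ∀ t ∈ s, HasDerivWithinAt (fun v => ⟪q' v, u⟫) (⟪q'' t, u⟫) s t := by
    intro t ht
    have h := ((hq' t (hssub ht)).mono hssub).inner ℝ (hasDerivWithinAt_const t s u)
    simpa using h
  have hgrow := aux_increase (f := fun v => ⟪q' v, u⟫) (f' := fun v => ⟪q'' v, u⟫)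
    (c := a/2) (by linarith : t₀ ≤ t₀ + τ) hder_h hacc
  have hht₀ : -ε ≤ ⟪q' t₀, u⟫ := by
    have h1 : |⟪q' t₀, u⟫| ≤ ‖q' t₀‖*‖u‖ := abs_real_inner_le_norm _ _
    rw [hunorm, mul_one] at h1
    have h2 := (abs_le.mp h1).1
    linarith
  have hfin : ε ≤ ⟪q' (t₀+τ), u⟫ := by
    have heq2 : t₀ + τ - t₀ = τ := by ring
    rw [heq2] at hgrow
    linarith [hkey3]
  have hlt : ‖q' (t₀+τ)‖ < ε := hT₀' _ (by linarith)
  have hle : ⟪q' (t₀+τ), u⟫ ≤ ‖q' (t₀+τ)‖ := by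
    have h := real_inner_le_norm (q' (t₀+τ)) u
    rwa [hunorm, mul_one] at h
  linarith
end
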